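/- Let n ≥ 1 be an integer, a, b ∈ ℝ, t < t₀, and let ψ : [t,t₀] → ℝ be C¹ with ψ'(s) > 0 and (1/(n+1))·(ψ'(s))^{n+1} = exp(ψ(s)+a) + b for all s ∈ [t,t₀]. Then exp(ξ+a) + b > 0 for every ξ ∈ [ψ(t), ψ(t₀)], and ∫_{ψ(t)}^{ψ(t₀)} (exp(ξ+a) + b)^{−1/(n+1)} dξ = (n+1)^{1/(n+1)}·(t₀ − t). -/

import Mathlib

/-- If `ψ` is `C¹` on `[t,t₀]` with `ψ' > 0` and satisfies the
first-integral form `(1/(n+1))·(ψ')^(n+1) = exp(ψ+a) + b`, then `exp(ξ+a)+b > 0` for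
all `ξ ∈ [ψ(t), ψ(t₀)]` and
`∫_{ψ(t)}^{ψ(t₀)} (exp(ξ+a)+b)^(−1/(n+1)) dξ = (n+1)^(1/(n+1))·(t₀−t)`. -/
theorem statement5 (n : ℕ) (hn : 1 ≤ n) (a b t t₀ : ℝ) (ht : t < t₀)
    (ψ ψ' : ℝ → ℝ)
    (hd : ∀ s ∈ Set.Icc t t₀, HasDerivWithinAt ψ (ψ' s) (Set.Icc t t₀) s)
    (hc : ContinuousOn ψ' (Set.Icc t t₀))
    (hpos : ∀ s ∈ Set.Icc t t₀, 0 < ψ' s)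
    (hODE : ∀ s ∈ Set.Icc t t₀,
      (1 / ((n : ℝ) + 1)) * (ψ' s) ^ (n + 1) = Real.exp (ψ s + a) + b) :
    (∀ ξ ∈ Set.Icc (ψ t) (ψ t₀), 0 < Real.exp (ξ + a) + b) ∧
    (∫ ξ in (ψ t)..(ψ t₀), (Real.exp (ξ + a) + b) ^ (-(1 : ℝ) / ((n : ℝ) + 1))) =
      ((n : ℝ) + 1) ^ ((1 : ℝ) / ((n : ℝ) + 1)) * (t₀ - t) := by
  have huIcc : Set.uIcc t t₀ = Set.Icc t t₀ := Set.uIcc_of_le ht.le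
  have hcont : ContinuousOn ψ (Set.Icc t t₀) := fun s hs => (hd s hs).continuousWithinAt
  have key : ∀ s ∈ Set.Icc t t₀, 0 < Real.exp (ψ s + a) + b := by
    intro s hs
    rw [← hODE s hs]
    have := hpos s hs
    positivity
  have h1 : ∀ ξ ∈ Set.Icc (ψ t) (ψ t₀), 0 < Real.exp (ξ + a) + b := by
    intro ξ hξ
    obtain ⟨s, hs, rfl⟩ := intermediate_value_Icc ht.le hcont hξ
    exact key s hs
  refine ⟨h1, ?_⟩
  set g : ℝ → ℝ := fun ξ => (Real.exp (ξ + a) + b) ^ (-(1 : ℝ) / ((n : ℝ) + 1)) with hg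
  have hnp : (0:ℝ) < (n:ℝ) + 1 := by positivity
  have heq : ∀ s ∈ Set.Icc t t₀, ψ' s • g (ψ s) = ((n : ℝ) + 1) ^ ((1 : ℝ) / ((n : ℝ) + 1)) := by
    intro s hs
    have hp := hpos s hs
    have h2 : Real.exp (ψ s + a) + b = (1 / ((n : ℝ) + 1)) * (ψ' s) ^ (n + 1) := (hODE s hs).symm
    rw [smul_eq_mul, hg]
    simp only []
    rw [h2, Real.mul_rpow (by positivity) (by positivity),
      ← Real.rpow_natCast (ψ' s) (n + 1), ← Real.rpow_mul hp.le]
    have h3 : ((n + 1 : ℕ) : ℝ) * (-(1 : ℝ) / ((n : ℝ) + 1)) = -1 := by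
      push_cast; field_simp
    rw [h3, Real.rpow_neg_one, one_div, Real.inv_rpow hnp.le, neg_div,
      Real.rpow_neg hnp.le, inv_inv]
    rw [one_div]
    field_simp
  have hsub : (∫ x in t..t₀, ψ' x • (g ∘ ψ) x) = ∫ u in (ψ t)..(ψ t₀), g u := by
    apply intervalIntegral.integral_comp_smul_deriv''
    · rwa [huIcc]
    · intro x hx
      rw [min_eq_left ht.le, max_eq_right ht.le] at hx
      exact (hd x (Set.Ioo_subset_Icc_self hx)).mono_of_mem_nhdsWithin
        (Icc_mem_nhdsGT_of_mem ⟨hx.1.le, hx.2⟩)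
    · rwa [huIcc]
    · rw [huIcc]
      apply ContinuousOn.rpow_const
      · fun_prop
      · rintro x ⟨s, hs, rfl⟩
        exact Or.inl (key s hs).ne'
  calc (∫ ξ in (ψ t)..(ψ t₀), g ξ) = ∫ x in t..t₀, ψ' x • (g ∘ ψ) x := hsub.symm
    _ = ∫ x in t..t₀, ((n : ℝ) + 1) ^ ((1 : ℝ) / ((n : ℝ) + 1)) := by
        apply intervalIntegral.integral_congr
        intro x hx
        rw [huIcc] at hx
        exact heq x hx
    _ = ((n : ℝ) + 1) ^ ((1 : ℝ) / ((n : ℝ) + 1)) * (t₀ - t) := by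
        rw [intervalIntegral.integral_const, smul_eq_mul, mul_comm]
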